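/- arXiv:1006.5225 — 3 statements merged into one kernel-verified Lean document; each statement's English description precedes it below -/
import Mathlib

section
/- If ψ : ℝ≥0 → ℝ≥0 is an Orlicz function (convex, ψ(0)=0, continuous at 0, ψ(x)/x → ∞) and there exist b > 1, C > 0, x₀ > 0 with ψ(x)^b ≤ ψ(Cx) for all x ≥ x₀, then for every b' > 1 there exist C' > 0 and x₁ > 0 such that ψ(x)^{b'} ≤ ψ(C'x) for all x ≥ x₁. -/
/-- If an Orlicz function satisfies `ψ(x)^b ≤ ψ(Cx)` for large `x` for some `b > 1`,
then for every `b' > 1` there are `C' > 0`, `x₁ > 0` with `ψ(x)^{b'} ≤ ψ(C'x)` for `x ≥ x₁`. -/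
theorem stmt_0 (ψ : ℝ → ℝ)
    (hconv : ConvexOn ℝ (Set.Ici 0) ψ)
    (hψ0 : ψ 0 = 0)
    (hcont : ContinuousWithinAt ψ (Set.Ici 0) 0)
    (hmono : MonotoneOn ψ (Set.Ici 0))
    (hnn : ∀ x, 0 ≤ x → 0 ≤ ψ x)
    (hlim : Filter.Tendsto (fun x => ψ x / x) Filter.atTop Filter.atTop)
    (hΔ : ∃ b : ℝ, 1 < b ∧ ∃ C : ℝ, 0 < C ∧ ∃ x₀ : ℝ, 0 < x₀ ∧
      ∀ x, x₀ ≤ x → ψ x ^ b ≤ ψ (C * x)) :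
    ∀ b' : ℝ, 1 < b' → ∃ C' : ℝ, 0 < C' ∧ ∃ x₁ : ℝ, 0 < x₁ ∧
      ∀ x, x₁ ≤ x → ψ x ^ b' ≤ ψ (C' * x) := by
  obtain ⟨b, hb, C, hC, x₀, hx₀, hΔ'⟩ := hΔ
  obtain ⟨M, hM⟩ := Filter.eventually_atTop.mp (hlim.eventually_ge_atTop 1)
  set C₂ : ℝ := max C 1 with hC₂def
  have hC₂1 : (1:ℝ) ≤ C₂ := le_max_right _ _
  have hC₂0 : (0:ℝ) < C₂ := lt_of_lt_of_le one_pos hC₂1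
  set x₂ : ℝ := max x₀ (max M 1) with hx₂def
  have hx₂0 : 0 < x₂ := lt_of_lt_of_le hx₀ (le_max_left _ _)
  -- ψ x ≥ 1 for x ≥ x₂
  have hψ1 : ∀ x, x₂ ≤ x → 1 ≤ ψ x := by
    intro x hx
    have hx1 : (1:ℝ) ≤ x := le_trans (le_trans (le_max_right M 1) (le_max_right x₀ _)) hx
    have hxM : M ≤ x := le_trans (le_trans (le_max_left M 1) (le_max_right x₀ _)) hx
    have h := hM x hxM
    have hxpos : 0 < x := lt_of_lt_of_le one_pos hx1
    have : x ≤ ψ x := by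
      have := (one_le_div hxpos).mp h
      linarith
    linarith
  -- Δ² with C₂
  have hΔ₂ : ∀ x, x₂ ≤ x → ψ x ^ b ≤ ψ (C₂ * x) := by
    intro x hx
    have hx0 : (0:ℝ) ≤ x := le_of_lt (lt_of_lt_of_le hx₂0 hx)
    have hxx₀ : x₀ ≤ x := le_trans (le_max_left _ _) hx
    refine (hΔ' x hxx₀).trans (hmono ?_ ?_ ?_)
    · exact Set.mem_Ici.mpr (mul_nonneg (le_of_lt hC) hx0)
    · exact Set.mem_Ici.mpr (mul_nonneg (le_of_lt hC₂0) hx0)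
    · exact mul_le_mul_of_nonneg_right (le_max_left _ _) hx0
  -- iteration
  have hiter : ∀ n : ℕ, ∀ x, x₂ ≤ x → ψ x ^ ((b ^ n : ℝ)) ≤ ψ (C₂ ^ n * x) := by
    intro n
    induction n with
    | zero =>
      intro x hx
      simp [Real.rpow_one]
    | succ n ih =>
      intro x hx
      have hx0 : (0:ℝ) ≤ x := le_of_lt (lt_of_lt_of_le hx₂0 hx)
      have hψx0 : 0 ≤ ψ x := hnn x hx0
      have hb0 : (0:ℝ) ≤ b := by linarith
      have hxC : x₂ ≤ C₂ ^ n * x :=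
        le_trans hx (le_mul_of_one_le_left hx0 (one_le_pow₀ hC₂1))
      calc ψ x ^ (b ^ (n+1) : ℝ) = (ψ x ^ (b ^ n : ℝ)) ^ b := by
            rw [pow_succ, Real.rpow_mul hψx0]
        _ ≤ (ψ (C₂ ^ n * x)) ^ b :=
            Real.rpow_le_rpow (Real.rpow_nonneg hψx0 _) (ih x hx) hb0
        _ ≤ ψ (C₂ * (C₂ ^ n * x)) := hΔ₂ _ hxC
        _ = ψ (C₂ ^ (n+1) * x) := by ring_nf
  intro b' hb'
  obtain ⟨n, hn⟩ := pow_unbounded_of_one_lt b' hb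
  refine ⟨C₂ ^ n, pow_pos hC₂0 n, x₂, hx₂0, fun x hx => ?_⟩
  have h1 : 1 ≤ ψ x := hψ1 x hx
  calc ψ x ^ b' ≤ ψ x ^ (b ^ n : ℝ) :=
        Real.rpow_le_rpow_of_exponent_le h1 (le_of_lt hn)
    _ ≤ ψ (C₂ ^ n * x) := hiter n x hx
end

section
/- If ψ : ℝ≥0 → ℝ≥0 is an Orlicz function satisfying the Δ²-Condition, then ψ satisfies the uniform ∇₀-Condition: there exist x₀ > 0 and C ≥ 1 such that for every β > 1 and all x₀ ≤ x ≤ y, ψ(βx)/ψ(x) ≤ ψ(βCy)/ψ(y). -/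
/-- An Orlicz function satisfying the Δ²-condition satisfies the uniform ∇₀-condition:
there are `x₀ > 0` and `C ≥ 1` such that for every `β > 1` and all `x₀ ≤ x ≤ y`,
`ψ(βx)·ψ(y) ≤ ψ(x)·ψ(βCy)`. -/
theorem stmt_3 (ψ : ℝ → ℝ)
    (hconv : ConvexOn ℝ (Set.Ici 0) ψ)
    (hψ0 : ψ 0 = 0)
    (hcont : ContinuousWithinAt ψ (Set.Ici 0) 0)
    (hmono : MonotoneOn ψ (Set.Ici 0))
    (hnn : ∀ x, 0 ≤ x → 0 ≤ ψ x)
    (hlim : Filter.Tendsto (fun x => ψ x / x) Filter.atTop Filter.atTop)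
    (hΔ : ∃ x₀ : ℝ, 0 < x₀ ∧ ∃ C : ℝ, 0 < C ∧ ∀ x, x₀ ≤ x → (ψ x) ^ 2 ≤ ψ (C * x)) :
    ∃ x₀ : ℝ, 0 < x₀ ∧ ∃ C : ℝ, 1 ≤ C ∧ (∀ x, x₀ ≤ x → 0 < ψ x) ∧
      ∀ β : ℝ, 1 < β → ∀ x y : ℝ, x₀ ≤ x → x ≤ y →
        ψ (β * x) * ψ y ≤ ψ x * ψ (β * C * y) := by
  obtain ⟨x₀, hx₀, C, hC, hΔ2⟩ := hΔ
  have h1 : ∀ᶠ x in Filter.atTop, (1:ℝ) ≤ ψ x / x := hlim.eventually_ge_atTop 1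
  obtain ⟨x₁, hψx₁, hx₁ge⟩ :=
    (h1.and (Filter.eventually_ge_atTop (max x₀ 1))).exists
  have hx₁1 : (1:ℝ) ≤ x₁ := le_trans (le_max_right _ _) hx₁ge
  have hx₁x₀ : x₀ ≤ x₁ := le_trans (le_max_left _ _) hx₁ge
  have hx₁pos : (0:ℝ) < x₁ := by linarith
  have hψ1 : 1 ≤ ψ x₁ := by
    have := (le_div_iff₀ hx₁pos).mp hψx₁
    linarith
  have hpos : ∀ x, x₁ ≤ x → 0 < ψ x := by
    intro x hx
    have : ψ x₁ ≤ ψ x := hmono (le_of_lt hx₁pos) (by linarith [hx₁pos] : (0:ℝ) ≤ x) hx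
    linarith
  refine ⟨x₁, hx₁pos, max C 1, le_max_right _ _, hpos, ?_⟩
  intro β hβ x y hx hxy
  have hxpos : (0:ℝ) < x := lt_of_lt_of_le hx₁pos hx
  have hypos : (0:ℝ) < y := lt_of_lt_of_le hxpos hxy
  have hβpos : (0:ℝ) < β := by linarith
  have hby : (0:ℝ) ≤ β * y := by positivity
  have hA : ψ (β * x) ≤ ψ (β * y) := by
    apply hmono (Set.mem_Ici.mpr (mul_pos hβpos hxpos).le) hby
    nlinarith
  have hB : ψ y ≤ ψ (β * y) := by
    apply hmono (le_of_lt hypos) hby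
    nlinarith
  have hC2 : (ψ (β * y)) ^ 2 ≤ ψ (C * (β * y)) := by
    apply hΔ2
    nlinarith
  have hD : ψ (C * (β * y)) ≤ ψ (β * max C 1 * y) := by
    apply hmono (Set.mem_Ici.mpr (mul_pos hC (mul_pos hβpos hypos)).le) (Set.mem_Ici.mpr (mul_pos (mul_pos hβpos (lt_of_lt_of_le one_pos (le_max_right C 1))) hypos).le)
    have hCm : C ≤ max C 1 := le_max_left _ _
    nlinarith
  have hx1 : 1 ≤ ψ x := by
    have := hmono (le_of_lt hx₁pos) (le_of_lt hxpos) hx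
    linarith
  calc ψ (β * x) * ψ y ≤ ψ (β * y) * ψ (β * y) :=
        mul_le_mul hA hB (hnn y (le_of_lt hypos)) (hnn (β * y) hby)
    _ = (ψ (β * y)) ^ 2 := (sq (ψ (β * y))).symm
    _ ≤ ψ (β * max C 1 * y) := le_trans hC2 hD
    _ ≤ ψ x * ψ (β * max C 1 * y) :=
        le_mul_of_one_le_left (hnn _ (Set.mem_Ici.mpr (mul_pos (mul_pos hβpos (lt_of_lt_of_le one_pos (le_max_right C 1))) hypos).le)) hx1
end

section
/- The non-isotropic pseudo-distance d(z,w) = √|1-⟨z,w⟩| satisfies the triangle inequality on the closed unit ball of ℂ^N: for all z,w,u with |z|,|w|,|u| ≤ 1, d(z,w) ≤ d(z,u) + d(u,w). -/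
open scoped InnerProductSpace

/-- Scalar two-dimensional Cauchy–Schwarz. -/
lemma aux_cs2 {a b c d : ℝ} (ha : 0 ≤ a) (hb : 0 ≤ b) (hc : 0 ≤ c) (hd : 0 ≤ d) :
    a * c + b * d ≤ Real.sqrt (a ^ 2 + b ^ 2) * Real.sqrt (c ^ 2 + d ^ 2) := by
  rw [← Real.sqrt_mul (by positivity)]
  rw [show a * c + b * d = Real.sqrt ((a * c + b * d) ^ 2) by
    rw [Real.sqrt_sq (by positivity)]]
  apply Real.sqrt_le_sqrt
  nlinarith [sq_nonneg (a * d - b * c)]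

/-- Key inequality: `‖⟪z,w⟫ - ⟪z,u⟫⟪u,w⟫‖ ≤ √(1-‖⟪z,u⟫‖²)·√(1-‖⟪u,w⟫‖²)`. -/
lemma aux_key {N : ℕ} (z w u : EuclideanSpace ℂ (Fin N))
    (hz : ‖z‖ ≤ 1) (hw : ‖w‖ ≤ 1) (hu : ‖u‖ ≤ 1) :
    ‖⟪z, w⟫_ℂ - ⟪z, u⟫_ℂ * ⟪u, w⟫_ℂ‖ ≤
      Real.sqrt (1 - ‖⟪z, u⟫_ℂ‖ ^ 2) * Real.sqrt (1 - ‖⟪u, w⟫_ℂ‖ ^ 2) := by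
  set s : ℂ := ⟪z, u⟫_ℂ with hs
  set t : ℂ := ⟪u, w⟫_ℂ with ht
  set A : EuclideanSpace ℂ (Fin N) := z - (starRingEnd ℂ s) • u with hA
  set B : EuclideanSpace ℂ (Fin N) := w - t • u with hB
  have hr2 : (0:ℝ) ≤ 1 - ‖u‖ ^ 2 := by nlinarith [norm_nonneg u]
  -- inner product identity
  have hid : ⟪z, w⟫_ℂ - s * t = ⟪A, B⟫_ℂ + ((1:ℂ) - ((‖u‖^2:ℝ):ℂ)) * (s * t) := by
    have huu : ⟪u, u⟫_ℂ = ((‖u‖^2:ℝ) : ℂ) := by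
      simp [inner_self_eq_norm_sq_to_K]
    rw [hA, hB]
    rw [inner_sub_left, inner_sub_right, inner_sub_right, inner_smul_left,
      inner_smul_left, inner_smul_right, inner_smul_right, huu]
    simp only [RingHom.id_apply, starRingEnd_self_apply, ← hs, ← ht]
    ring
  -- norms of A and B
  have hnA : ‖A‖ ^ 2 = ‖z‖ ^ 2 - 2 * ‖s‖ ^ 2 + ‖s‖ ^ 2 * ‖u‖ ^ 2 := by
    have h := @norm_sub_sq ℂ _ _ _ _ z ((starRingEnd ℂ s) • u)
    rw [inner_smul_right, ← hs] at h
    simp only [norm_smul, RCLike.norm_conj] at h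
    have hre : RCLike.re ((starRingEnd ℂ) s * s) = ‖s‖ ^ 2 := by
      simp [RCLike.conj_mul]; norm_cast
    rw [hA, h, hre]; ring
  have hnB : ‖B‖ ^ 2 = ‖w‖ ^ 2 - 2 * ‖t‖ ^ 2 + ‖t‖ ^ 2 * ‖u‖ ^ 2 := by
    have h := @norm_sub_sq ℂ _ _ _ _ w (t • u)
    rw [inner_smul_right] at h
    simp only [norm_smul] at h
    have hre : RCLike.re (t * ⟪w, u⟫_ℂ) = ‖t‖ ^ 2 := by
      rw [← inner_conj_symm w u, ← ht, RCLike.mul_conj]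
      norm_cast
    rw [hB, h, hre]; ring
  -- step 1
  have h1 : ‖⟪z, w⟫_ℂ - s * t‖ ≤ ‖A‖ * ‖B‖ + (1 - ‖u‖ ^ 2) * (‖s‖ * ‖t‖) := by
    rw [hid]
    calc ‖⟪A, B⟫_ℂ + ((1:ℂ) - ((‖u‖^2:ℝ):ℂ)) * (s * t)‖
        ≤ ‖⟪A, B⟫_ℂ‖ + ‖((1:ℂ) - ((‖u‖^2:ℝ):ℂ)) * (s * t)‖ := norm_add_le _ _
      _ ≤ ‖A‖ * ‖B‖ + (1 - ‖u‖ ^ 2) * (‖s‖ * ‖t‖) := by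
          gcongr
          · exact norm_inner_le_norm A B
          · rw [norm_mul, norm_mul]
            have : ((1:ℂ) - ((‖u‖^2:ℝ):ℂ)) = (((1 - ‖u‖ ^ 2 : ℝ)):ℂ) := by push_cast; ring
            rw [this, Complex.norm_real, Real.norm_of_nonneg hr2]
  set e : ℝ := Real.sqrt (1 - ‖u‖ ^ 2) with he
  have he2 : e ^ 2 = 1 - ‖u‖ ^ 2 := Real.sq_sqrt hr2
  have h2 : ‖A‖ * ‖B‖ + (e * ‖s‖) * (e * ‖t‖) ≤
      Real.sqrt (‖A‖ ^ 2 + (e * ‖s‖) ^ 2) * Real.sqrt (‖B‖ ^ 2 + (e * ‖t‖) ^ 2) :=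
    aux_cs2 (norm_nonneg A) (by positivity) (norm_nonneg B) (by positivity)
  have hAs : Real.sqrt (‖A‖ ^ 2 + (e * ‖s‖) ^ 2) ≤ Real.sqrt (1 - ‖s‖ ^ 2) := by
    apply Real.sqrt_le_sqrt
    rw [mul_pow, he2, hnA]; nlinarith [norm_nonneg z]
  have hBt : Real.sqrt (‖B‖ ^ 2 + (e * ‖t‖) ^ 2) ≤ Real.sqrt (1 - ‖t‖ ^ 2) := by
    apply Real.sqrt_le_sqrt
    rw [mul_pow, he2, hnB]; nlinarith [norm_nonneg w]
  calc ‖⟪z, w⟫_ℂ - s * t‖ ≤ ‖A‖ * ‖B‖ + (1 - ‖u‖ ^ 2) * (‖s‖ * ‖t‖) := h1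
    _ = ‖A‖ * ‖B‖ + (e * ‖s‖) * (e * ‖t‖) := by rw [← he2]; ring
    _ ≤ Real.sqrt (‖A‖ ^ 2 + (e * ‖s‖) ^ 2) * Real.sqrt (‖B‖ ^ 2 + (e * ‖t‖) ^ 2) := h2
    _ ≤ Real.sqrt (1 - ‖s‖ ^ 2) * Real.sqrt (1 - ‖t‖ ^ 2) :=
        mul_le_mul hAs hBt (Real.sqrt_nonneg _) (Real.sqrt_nonneg _)

/-- The non-isotropic pseudo-distance `d(z,w) = √|1-⟨z,w⟩|` satisfies the triangle
inequality on the closed unit ball of ℂ^N. -/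
theorem stmt_11 (N : ℕ) (hN : 1 ≤ N)
    (d : EuclideanSpace ℂ (Fin N) → EuclideanSpace ℂ (Fin N) → ℝ)
    (hd : ∀ x y, d x y = Real.sqrt ‖(1 : ℂ) - (inner ℂ x y : ℂ)‖)
    (z w u : EuclideanSpace ℂ (Fin N))
    (hz : ‖z‖ ≤ 1) (hw : ‖w‖ ≤ 1) (hu : ‖u‖ ≤ 1) :
    d z w ≤ d z u + d u w := by
  rw [hd, hd, hd]
  set p : ℂ := ⟪z, w⟫_ℂ with hp
  set s : ℂ := ⟪z, u⟫_ℂ with hs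
  set t : ℂ := ⟪u, w⟫_ℂ with ht
  set x : ℝ := Real.sqrt ‖(1:ℂ) - s‖ with hx
  set y : ℝ := Real.sqrt ‖(1:ℂ) - t‖ with hy
  have hs1 : ‖s‖ ≤ 1 := by
    calc ‖s‖ ≤ ‖z‖ * ‖u‖ := norm_inner_le_norm z u
      _ ≤ 1 := by nlinarith [norm_nonneg z, norm_nonneg u]
  have ht1 : ‖t‖ ≤ 1 := by
    calc ‖t‖ ≤ ‖u‖ * ‖w‖ := norm_inner_le_norm u w
      _ ≤ 1 := by nlinarith [norm_nonneg u, norm_nonneg w]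
  have hkey := aux_key z w u hz hw hu
  -- √(1-‖s‖²) ≤ √2 · x
  have hxs : Real.sqrt (1 - ‖s‖ ^ 2) ≤ Real.sqrt 2 * x := by
    rw [hx, ← Real.sqrt_mul (by norm_num)]
    apply Real.sqrt_le_sqrt
    have : (1:ℝ) - ‖s‖ ≤ ‖(1:ℂ) - s‖ := by
      have := norm_sub_norm_le (1:ℂ) s
      simpa using this
    nlinarith [norm_nonneg s]
  have hyt : Real.sqrt (1 - ‖t‖ ^ 2) ≤ Real.sqrt 2 * y := by
    rw [hy, ← Real.sqrt_mul (by norm_num)]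
    apply Real.sqrt_le_sqrt
    have : (1:ℝ) - ‖t‖ ≤ ‖(1:ℂ) - t‖ := by
      have := norm_sub_norm_le (1:ℂ) t
      simpa using this
    nlinarith [norm_nonneg t]
  have h5 : ‖p - s * t‖ ≤ 2 * (x * y) := by
    calc ‖p - s * t‖ ≤ Real.sqrt (1 - ‖s‖ ^ 2) * Real.sqrt (1 - ‖t‖ ^ 2) := hkey
      _ ≤ (Real.sqrt 2 * x) * (Real.sqrt 2 * y) := by
          apply mul_le_mul hxs hyt (Real.sqrt_nonneg _)
          positivity
      _ = (Real.sqrt 2 * Real.sqrt 2) * (x * y) := by ring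
      _ = 2 * (x * y) := by rw [Real.mul_self_sqrt (by norm_num)]
  have h4 : ‖(1:ℂ) - s * t‖ ≤ ‖(1:ℂ) - s‖ + ‖(1:ℂ) - t‖ := by
    calc ‖(1:ℂ) - s * t‖ = ‖((1:ℂ) - s) + s * ((1:ℂ) - t)‖ := by ring_nf
      _ ≤ ‖(1:ℂ) - s‖ + ‖s * ((1:ℂ) - t)‖ := norm_add_le _ _
      _ ≤ ‖(1:ℂ) - s‖ + ‖(1:ℂ) - t‖ := by
          rw [norm_mul]
          nlinarith [norm_nonneg ((1:ℂ) - t), norm_nonneg s]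
  have h3 : ‖(1:ℂ) - p‖ ≤ ‖(1:ℂ) - s * t‖ + ‖p - s * t‖ := by
    calc ‖(1:ℂ) - p‖ = ‖((1:ℂ) - s * t) - (p - s * t)‖ := by ring_nf
      _ ≤ ‖(1:ℂ) - s * t‖ + ‖p - s * t‖ := norm_sub_le _ _
  have hfinal : ‖(1:ℂ) - p‖ ≤ (x + y) ^ 2 := by
    have hx2 : x ^ 2 = ‖(1:ℂ) - s‖ := Real.sq_sqrt (norm_nonneg _)
    have hy2 : y ^ 2 = ‖(1:ℂ) - t‖ := Real.sq_sqrt (norm_nonneg _)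
    have : (x + y) ^ 2 = ‖(1:ℂ) - s‖ + ‖(1:ℂ) - t‖ + 2 * (x * y) := by
      rw [add_sq, hx2, hy2]; ring
    rw [this]
    linarith
  calc Real.sqrt ‖(1:ℂ) - p‖ ≤ Real.sqrt ((x + y) ^ 2) := Real.sqrt_le_sqrt hfinal
    _ = x + y := Real.sqrt_sq (by positivity)
end
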